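/- Let δ ∈ (0, π/2), a > 0, c₀ > 0. There exists ε₀ = ε₀(δ, a, c₀) > 0 such that: if g₀ ∈ ℂ satisfies |g₀| < ε ≤ ε₀ and |Arg g₀| ≤ π − δ, and (a_n) satisfies Re(a_n) ≥ a/2, |a_n − a| ≤ c₀|g₀|, then setting A_n = (1/n)Σ_{k<n} a_k and g̃_n = g₀/(1 + g₀ n A_n), one has |g̃_n| ≤ 2ε/sin δ and |Arg g̃_n| ≤ π − δ/2 for all n ≥ 1. -/

import Mathlib

open Real Complex

set_option maxHeartbeats 800000

lemma my_arg_le_iff (u : ℂ) (η : ℝ) (h0 : 0 ≤ η) (h1 : η ≤ π) :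
    |u.arg| ≤ π - η ↔ -(Real.cos η) * ‖u‖ ≤ u.re := by
  rcases eq_or_ne u 0 with rfl | hu
  · simp only [Complex.arg_zero, abs_zero, norm_zero, Complex.zero_re, mul_zero]
    constructor <;> intro <;> linarith
  · have habs : 0 < ‖u‖ := norm_pos_iff.mpr hu
    have hcos : Real.cos |u.arg| = u.re / ‖u‖ := by
      rw [Real.cos_abs]; exact Complex.cos_arg hu
    have harg1 : |u.arg| ≤ π :=
      abs_le.mpr ⟨(Complex.neg_pi_lt_arg u).le, Complex.arg_le_pi u⟩
    constructor
    · intro h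
      have h2 : Real.cos (π - η) ≤ Real.cos |u.arg| :=
        Real.cos_le_cos_of_nonneg_of_le_pi (abs_nonneg _) (by linarith) h
      rw [Real.cos_pi_sub, hcos] at h2
      exact (le_div_iff₀ habs).mp h2
    · intro h
      by_contra hlt
      push_neg at hlt
      have h2 : Real.cos |u.arg| < Real.cos (π - η) :=
        Real.cos_lt_cos_of_nonneg_of_le_pi (by linarith) harg1 hlt
      rw [Real.cos_pi_sub, hcos] at h2
      have := (div_lt_iff₀ habs).mp h2
      linarith

theorem stmt_1 (δ a c₀ : ℝ) (hδ : δ ∈ Set.Ioo 0 (π / 2)) (ha : 0 < a) (hc₀ : 0 < c₀) :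
    ∃ ε₀ > 0, ∀ ε : ℝ, 0 < ε → ε ≤ ε₀ →
      ∀ g₀ : ℂ, ‖g₀‖ < ε → |g₀.arg| ≤ π - δ →
        ∀ aseq : ℕ → ℂ,
          (∀ n, a / 2 ≤ (aseq n).re) →
          (∀ n, ‖aseq n - (a : ℂ)‖ ≤ c₀ * ‖g₀‖) →
          ∀ n : ℕ, 1 ≤ n →
            ‖g₀ / (1 + g₀ * n * ((n : ℂ)⁻¹ * ∑ k ∈ Finset.range n, aseq k))‖ ≤
                2 * ε / Real.sin δ ∧
              |(g₀ / (1 + g₀ * n * ((n : ℂ)⁻¹ * ∑ k ∈ Finset.range n, aseq k))).arg| ≤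
                π - δ / 2 := by
  obtain ⟨hδ0, hδπ⟩ := hδ
  have hπ : (0:ℝ) < π := Real.pi_pos
  have hsδ : 0 < Real.sin δ := Real.sin_pos_of_pos_of_lt_pi hδ0 (by linarith)
  have hcδ : 0 < Real.cos δ := Real.cos_pos_of_mem_Ioo ⟨by linarith, hδπ⟩
  have hsδ1 : Real.sin δ ≤ 1 := Real.sin_le_one δ
  have hch : 0 < Real.cos (δ/2) := Real.cos_pos_of_mem_Ioo ⟨by linarith, by linarith⟩
  have hsh : 0 < Real.sin (δ/2) := Real.sin_pos_of_pos_of_lt_pi (by linarith) (by linarith)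
  have hpyth : Real.sin δ ^ 2 + Real.cos δ ^ 2 = 1 := Real.sin_sq_add_cos_sq δ
  have hpyth2 : Real.sin (δ/2) ^ 2 + Real.cos (δ/2) ^ 2 = 1 := Real.sin_sq_add_cos_sq _
  set T := Real.tan δ with hTdef
  set T2 := Real.tan (δ/2) with hT2def
  have htan : T2 < T :=
    Real.tan_lt_tan_of_nonneg_of_lt_pi_div_two (by linarith) hδπ (by linarith)
  have hTc : T * Real.cos δ = Real.sin δ := Real.tan_mul_cos hcδ.ne'
  have hT2c : T2 * Real.cos (δ/2) = Real.sin (δ/2) := Real.tan_mul_cos hch.ne'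
  have hT2pos : 0 < T2 := by
    rw [hT2def]
    exact Real.tan_pos_of_pos_of_lt_pi_div_two (by linarith) (by linarith)
  have hT0 : 0 < T := lt_trans hT2pos htan
  set m := min (T - T2) (min (Real.sin δ / 4) (3/16)) with hmdef
  have hm0 : 0 < m := by
    apply lt_min (by linarith) (lt_min (by linarith) (by norm_num))
  refine ⟨a * m / (2 * c₀), by positivity, ?_⟩
  intro ε hε hεle g₀ hg₀abs hg₀arg aseq hre habs n hn
  set μ := 2 * c₀ * ε / a with hμdef
  have hμ0 : 0 < μ := by positivity
  have hμm : μ ≤ m := by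
    rw [hμdef, div_le_iff₀ ha]
    have h := (le_div_iff₀ (by positivity : (0:ℝ) < 2 * c₀)).mp hεle
    linarith only [h]
  have hμ1 : μ ≤ T - T2 := hμm.trans (min_le_left _ _)
  have hμ2 : μ ≤ Real.sin δ / 4 := hμm.trans ((min_le_right _ _).trans (min_le_left _ _))
  have hμ3 : μ ≤ 3/16 := hμm.trans ((min_le_right _ _).trans (min_le_right _ _))
  have hn0 : (n:ℂ) ≠ 0 := Nat.cast_ne_zero.mpr (by omega)
  set S : ℂ := ∑ k ∈ Finset.range n, aseq k with hSdef
  have hexpr : g₀ * (n:ℂ) * ((n:ℂ)⁻¹ * S) = g₀ * S := by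
    field_simp
  rw [hexpr]
  rcases eq_or_ne g₀ 0 with rfl | hg0
  · rw [zero_div]
    constructor
    · rw [norm_zero]; positivity
    · rw [Complex.arg_zero, abs_zero]; linarith
  have habsg₀ : 0 < ‖g₀‖ := norm_pos_iff.mpr hg0
  set w : ℂ := g₀⁻¹ + S with hwdef
  have hgw : g₀ / (1 + g₀ * S) = w⁻¹ := by
    have h1 : 1 + g₀ * S = g₀ * w := by rw [hwdef]; field_simp
    rw [h1, div_mul_cancel_left₀ hg0]
  rw [hgw]
  -- real variables
  set p := (g₀⁻¹).re with hpdef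
  set q := (g₀⁻¹).im with hqdef
  set R := ‖g₀⁻¹‖ with hRdef
  set s := S.re with hsdef
  set t := S.im with htdef
  set M := ‖w‖ with hMdef
  have hR0 : 0 < R := norm_pos_iff.mpr (inv_ne_zero hg0)
  have hM0 : 0 ≤ M := norm_nonneg w
  have hR2 : p ^ 2 + q ^ 2 = R ^ 2 := by
    rw [hRdef, Complex.sq_norm, Complex.normSq_apply]; ring
  have hM2 : M ^ 2 = (p + s) ^ 2 + (q + t) ^ 2 := by
    rw [hMdef, Complex.sq_norm, Complex.normSq_apply, hwdef, Complex.add_re, Complex.add_im]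
    ring
  have hεR : 1 ≤ ε * R := by
    have h1 : R = (‖g₀‖)⁻¹ := by rw [hRdef, norm_inv]
    rw [h1, ← div_eq_mul_inv, le_div_iff₀ habsg₀, one_mul]
    exact hg₀abs.le
  have hpre : -(Real.cos δ) * R ≤ p := by
    have h1 := (my_arg_le_iff g₀ δ hδ0.le (by linarith)).mp hg₀arg
    have h2 : p = g₀.re / ‖g₀‖ ^ 2 := by
      rw [hpdef, Complex.inv_re, Complex.normSq_eq_norm_sq]
    have h3 : R = (‖g₀‖)⁻¹ := by
      rw [hRdef, norm_inv]
    rw [h2, h3, le_div_iff₀ (by positivity)]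
    have h4 : -Real.cos δ * (‖g₀‖)⁻¹ * ‖g₀‖ ^ 2
        = -Real.cos δ * ‖g₀‖ := by
      field_simp
    rw [h4]
    exact h1
  -- sum estimates
  have hs : (n:ℝ) * (a/2) ≤ s := by
    rw [hsdef, hSdef, Complex.re_sum]
    calc (n:ℝ) * (a/2) = ∑ _k ∈ Finset.range n, (a/2) := by
          rw [Finset.sum_const, Finset.card_range, nsmul_eq_mul]
      _ ≤ _ := Finset.sum_le_sum (fun k _ => hre k)
  have hs0 : 0 < s :=
    lt_of_lt_of_le (by positivity : (0:ℝ) < (n:ℝ) * (a/2)) hs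
  have hSna : ‖(S - n * a)‖ ≤ n * (c₀ * ‖g₀‖) := by
    have h1 : S - (n:ℂ) * (a:ℂ) = ∑ k ∈ Finset.range n, (aseq k - (a:ℂ)) := by
      rw [hSdef, Finset.sum_sub_distrib, Finset.sum_const, Finset.card_range]
      push_cast; ring
    rw [h1]
    calc ‖∑ k ∈ Finset.range n, (aseq k - (a:ℂ))‖
        ≤ ∑ k ∈ Finset.range n, ‖(aseq k - (a:ℂ))‖ :=
          norm_sum_le _ _
      _ ≤ ∑ _k ∈ Finset.range n, c₀ * ‖g₀‖ :=
          Finset.sum_le_sum (fun k _ => habs k)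
      _ = n * (c₀ * ‖g₀‖) := by
          rw [Finset.sum_const, Finset.card_range, nsmul_eq_mul]
  have ht : |t| ≤ μ * s := by
    have h1 : |t| ≤ (n:ℝ) * (c₀ * ε) := by
      have h2 : t = (S - (n:ℂ) * (a:ℂ)).im := by
        rw [htdef, Complex.sub_im, Complex.mul_im]
        simp
      rw [h2]
      calc |(S - (n:ℂ) * (a:ℂ)).im| ≤ ‖(S - (n:ℂ) * (a:ℂ))‖ :=
            Complex.abs_im_le_norm _
        _ ≤ n * (c₀ * ‖g₀‖) := hSna
        _ ≤ (n:ℝ) * (c₀ * ε) := by gcongr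
    have hn2 : (n:ℝ) * (c₀ * ε) ≤ μ * s := by
      rw [hμdef, div_mul_eq_mul_div, le_div_iff₀ ha]
      have h3 : (n:ℝ) * (a/2) * (2 * c₀ * ε) ≤ s * (2 * c₀ * ε) :=
        mul_le_mul_of_nonneg_right hs (by positivity)
      linarith only [h3]
    linarith only [h1, hn2]
  -- main lower bound on M
  have hMlb : Real.sin δ / (2 * ε) ≤ M := by
    rw [div_le_iff₀ (by positivity)]
    rcases le_or_gt (2 * R) s with hcase | hcase
    · have hRps : R ≤ p + s := by
        nlinarith only [Real.cos_le_one δ, hpre, hcase, hR0]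
      have hMps : p + s ≤ M := by
        nlinarith only [hM2, sq_nonneg (q + t), hRps, hR0, hM0]
      nlinarith only [hεR, hMps, hRps, hε, hsδ1]
    · have htR : |t| ≤ 2 * μ * R := by
        nlinarith only [ht, hμ0, hcase]
      rcases le_or_gt 0 p with hp0 | hp0
      · have habsq : |q| ≤ R := by
          nlinarith only [hR2, _root_.sq_abs q, abs_nonneg q, sq_nonneg p, hR0]
        have hqt : -(|q| * |t|) ≤ q * t := by
          rw [← abs_mul]; exact neg_abs_le _
        have e1 : |q| * |t| ≤ R * (2 * μ * R) :=
          mul_le_mul habsq htR (abs_nonneg t) hR0.le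
        have e2 : -(R * (2 * μ * R)) ≤ q * t := by linarith only [hqt, e1]
        have e3 : p ^ 2 ≤ (p + s) ^ 2 := by
          nlinarith only [hp0, hs0.le, sq_nonneg s]
        have e4 : (q + t) ^ 2 = q ^ 2 + 2 * (q * t) + t ^ 2 := by ring
        have hM2' : R ^ 2 * (1 - 4 * μ) ≤ M ^ 2 := by
          linarith only [sq_nonneg t, e2, e3, hM2, hR2, e4]
        have hM' : R / 2 ≤ M := by
          nlinarith only [hM2', hμ3, hM0, hR0, sq_nonneg R]
        nlinarith only [hεR, hM', hε, hsδ1]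
      · have hpp : p ^ 2 ≤ Real.cos δ ^ 2 * R ^ 2 := by
          nlinarith only [hpre, hp0, mul_pos hcδ hR0]
        have hq2' : Real.sin δ ^ 2 * R ^ 2 ≤ q ^ 2 := by
          nlinarith only [hpp, hR2, hpyth, sq_nonneg R]
        have hqlb : R * Real.sin δ ≤ |q| := by
          nlinarith only [hq2', _root_.sq_abs q, abs_nonneg q, mul_pos hR0 hsδ]
        have hqt2 : R * (Real.sin δ / 2) ≤ |q| - |t| := by
          nlinarith only [hqlb, htR, hμ2, hR0]
        have hqtsq : (|q| - |t|) ^ 2 ≤ (q + t) ^ 2 := by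
          have hqt : -(|q| * |t|) ≤ q * t := by rw [← abs_mul]; exact neg_abs_le _
          nlinarith only [_root_.sq_abs q, _root_.sq_abs t, hqt]
        have hM' : R * (Real.sin δ / 2) ≤ M := by
          nlinarith only [hM2, sq_nonneg (p + s), hqt2, hqtsq, hM0,
            mul_pos hR0 (half_pos hsδ)]
        nlinarith only [hεR, hM', hε, hsδ, hR0]
  have hMpos : 0 < M := lt_of_lt_of_le (by positivity) hMlb
  -- key real inequality for the argument bound
  have hkey : -(Real.cos (δ/2)) * M ≤ p + s := by
    rcases le_or_gt 0 (p + s) with hps | hps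
    · nlinarith only [hch, hM0, hps]
    · have hpneg : p < 0 := by linarith only [hps, hs0]
      have hpp : p ^ 2 ≤ Real.cos δ ^ 2 * R ^ 2 := by
        nlinarith only [hpre, hpneg, mul_pos hcδ hR0]
      have hq2' : Real.sin δ ^ 2 * R ^ 2 ≤ q ^ 2 := by
        nlinarith only [hpp, hR2, hpyth, sq_nonneg R]
      have h2 : ((-p) * T) ^ 2 * Real.cos δ ^ 2 ≤ q ^ 2 * Real.cos δ ^ 2 := by
        have h2' : ((-p) * T) ^ 2 * Real.cos δ ^ 2 = p ^ 2 * Real.sin δ ^ 2 := by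
          rw [← hTc]; ring
        rw [h2']
        nlinarith only [hpp, hq2', sq_nonneg (Real.sin δ), sq_nonneg (Real.cos δ)]
      have h1' : ((-p) * T) ^ 2 ≤ q ^ 2 := by
        nlinarith only [h2, pow_pos hcδ 2]
      have hqlb : (-p) * T ≤ |q| := by
        nlinarith only [h1', _root_.sq_abs q, abs_nonneg q,
          mul_nonneg (neg_nonneg.mpr hpneg.le) hT0.le]
      have hqtlb : (-(p + s)) * T2 ≤ |q + t| := by
        have e1 : (-(p + s)) * T2 ≤ (-p) * (T - μ) := by
          nlinarith only [hμ1, hpneg, hs0, hT2pos]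
        have e3 : |t| ≤ μ * (-p) := by
          nlinarith only [ht, hμ0, hps]
        have e2 : (-p) * (T - μ) ≤ |q| - |t| := by
          linarith only [hqlb, e3]
        have e4 : |q| - |t| ≤ |q + t| := by
          have := abs_sub_abs_le_abs_sub q (-t)
          simp only [abs_neg, sub_neg_eq_add] at this
          linarith only [this]
        linarith only [e1, e2, e4]
      have h6 : (Real.cos (δ/2) * ((-(p+s)) * T2)) ^ 2
          = (Real.sin (δ/2)) ^ 2 * (p+s) ^ 2 := by
        rw [← hT2c]; ring
      have h7 : ((-(p + s)) * T2) ^ 2 ≤ (q + t) ^ 2 := by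
        nlinarith only [hqtlb, _root_.sq_abs (q + t), abs_nonneg (q + t),
          mul_nonneg (by linarith only [hps] : (0:ℝ) ≤ -(p+s)) hT2pos.le]
      have h5 : (p + s) ^ 2 ≤ (Real.cos (δ/2) * M) ^ 2 := by
        nlinarith only [hM2, h6, h7, hpyth2, sq_nonneg (Real.cos (δ/2)), sq_nonneg (p+s)]
      nlinarith only [h5, mul_nonneg hch.le hM0, hps]
  constructor
  · rw [norm_inv]
    calc M⁻¹ ≤ (Real.sin δ / (2 * ε))⁻¹ :=
          inv_anti₀ (by positivity) hMlb
      _ = 2 * ε / Real.sin δ := by rw [inv_div]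
  · rw [my_arg_le_iff w⁻¹ (δ/2) (by linarith) (by linarith)]
    have hwre : w.re = p + s := by rw [hwdef, Complex.add_re]
    have e1 : ‖w⁻¹‖ = M⁻¹ := by rw [norm_inv]
    have e2 : (w⁻¹).re = (p + s) / M ^ 2 := by
      rw [Complex.inv_re, Complex.normSq_eq_norm_sq, hwre]
    rw [e1, e2, le_div_iff₀ (by positivity)]
    have e3 : -Real.cos (δ/2) * M⁻¹ * M ^ 2 = -Real.cos (δ/2) * M := by
      field_simp
    rw [e3]
    exact hkey
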